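/- Let ω < 0, 0 < α ≤ 1 and 0 < αγ ≤ β ≤ 1, and let A ∈ ℂ. For every s ∈ ℂ with Re(s) > 0 and |A| < |F(s)|, the transfer function H(s) = s^(β−αγ−1)·(s^α − ω)^γ / (F(s) − A) admits the convergent series representation H(s) = Σ_{j=0}^∞ A^j · s^(αγj − jβ − 1) · (s^α − ω)^(−jγ), where all powers are principal-branch complex powers. -/

import Mathlib

open Real Complex Filter Set Topology

/-- The curve parametrization Λ(θ) bounding the stability region. -/
noncomputable def Lam (α β γ ω : ℝ) (θ : ℝ) : ℂ :=
  ((|ω| ^ (β / α) * Real.sin θ ^ (β / α - γ) * Real.sin (α * π / 2) ^ γ *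
      Real.sin (α * π / 2 - θ) ^ (-(β / α)) : ℝ) : ℂ) *
    Complex.exp (Complex.I * ((γ * θ + (β - α * γ) * π / 2 : ℝ) : ℂ))

/-- The characteristic function F(s) = s^(β-αγ) (s^α - ω)^γ (principal branches). -/
noncomputable def Fc (α β γ ω : ℝ) (s : ℂ) : ℂ :=
  s ^ ((β - α * γ : ℝ) : ℂ) * (s ^ ((α : ℝ) : ℂ) - (ω : ℂ)) ^ ((γ : ℝ) : ℂ)

/-- μ(θ) = (|ω| sin θ / sin(απ/2 - θ))^(1/α). -/
noncomputable def muP (α ω : ℝ) (θ : ℝ) : ℝ :=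
  (|ω| * Real.sin θ / Real.sin (α * π / 2 - θ)) ^ (1 / α)

/-- ρ(θ) = |ω| sin(απ/2) / sin(απ/2 - θ). -/
noncomputable def rhoP (α ω : ℝ) (θ : ℝ) : ℝ :=
  |ω| * Real.sin (α * π / 2) / Real.sin (α * π / 2 - θ)

/-- The transfer function H(s) = s^(β-αγ-1)(s^α-ω)^γ / (F(s) - A). -/
noncomputable def Hc (α β γ ω : ℝ) (A : ℂ) (s : ℂ) : ℂ :=
  s ^ ((β - α * γ - 1 : ℝ) : ℂ) * (s ^ ((α : ℝ) : ℂ) - (ω : ℂ)) ^ ((γ : ℝ) : ℂ) /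
    (Fc α β γ ω s - A)

theorem H_series_large_s (α β γ ω : ℝ) (hω : ω < 0) (hα0 : 0 < α) (hα1 : α ≤ 1)
    (hαγ : 0 < α * γ) (hβ0 : α * γ ≤ β) (hβ1 : β ≤ 1) (A : ℂ) :
    ∀ s : ℂ, 0 < s.re → ‖A‖ < ‖Fc α β γ ω s‖ →
      HasSum
        (fun j : ℕ => A ^ j * s ^ ((α * γ * j - j * β - 1 : ℝ) : ℂ) *
          (s ^ ((α : ℝ) : ℂ) - (ω : ℂ)) ^ ((-(j * γ) : ℝ) : ℂ))
        (Hc α β γ ω A s) := by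

  intro s hs hA
  have hs0 : s ≠ 0 := fun h => by simp [h] at hs
  set a : ℂ := s ^ ((β - α * γ : ℝ) : ℂ) with ha
  set b : ℂ := (s ^ ((α : ℝ) : ℂ) - (ω : ℂ)) ^ ((γ : ℝ) : ℂ) with hb
  have hF : Fc α β γ ω s = a * b := rfl
  have hF0 : Fc α β γ ω s ≠ 0 := by
    intro h
    rw [h] at hA
    simpa using (norm_nonneg A).not_gt (by simpa using hA)
  have hFA : Fc α β γ ω s - A ≠ 0 := by
    intro h
    have : A = Fc α β γ ω s := by linear_combination -h
    rw [this] at hA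
    exact lt_irrefl _ hA
  have hr : ‖A / Fc α β γ ω s‖ < 1 := by
    rw [norm_div,
      div_lt_one (lt_of_le_of_lt (norm_nonneg A) hA)]
    exact hA
  have hgeom := (hasSum_geometric_of_norm_lt_one hr).mul_right s⁻¹
  have hterm : ∀ j : ℕ, (A / Fc α β γ ω s) ^ j * s⁻¹ =
      A ^ j * s ^ ((α * γ * j - j * β - 1 : ℝ) : ℂ) *
        (s ^ ((α : ℝ) : ℂ) - (ω : ℂ)) ^ ((-(j * γ) : ℝ) : ℂ) := by
    intro j
    have h1 : ((α * γ * j - j * β - 1 : ℝ) : ℂ) = (j : ℕ) * (-((β - α * γ : ℝ) : ℂ)) + (-1) := by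
      push_cast; ring
    have h2 : ((-(j * γ) : ℝ) : ℂ) = (j : ℕ) * (-((γ : ℝ) : ℂ)) := by push_cast; ring
    rw [h1, h2, Complex.cpow_add _ _ hs0, Complex.cpow_nat_mul, Complex.cpow_nat_mul,
      Complex.cpow_neg_one, hF]
    simp only [Complex.cpow_neg, ← ha, ← hb]
    rw [div_pow, mul_pow]
    ring
  have hsum : HasSum
      (fun j : ℕ => A ^ j * s ^ ((α * γ * j - j * β - 1 : ℝ) : ℂ) *
        (s ^ ((α : ℝ) : ℂ) - (ω : ℂ)) ^ ((-(j * γ) : ℝ) : ℂ))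
      ((1 - A / Fc α β γ ω s)⁻¹ * s⁻¹) := by
    exact hgeom.congr_fun fun j => (hterm j).symm
  convert hsum using 1
  have hnum : s ^ ((β - α * γ - 1 : ℝ) : ℂ) = a * s⁻¹ := by
    have : ((β - α * γ - 1 : ℝ) : ℂ) = ((β - α * γ : ℝ) : ℂ) + (-1) := by push_cast; ring
    rw [this, Complex.cpow_add _ _ hs0, Complex.cpow_neg_one, ha]
  have hab : a * b ≠ 0 := by rw [← hF]; exact hF0
  rw [hF] at hFA
  have key : (1 - A / (a * b))⁻¹ = a * b / (a * b - A) := by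
    rw [one_sub_div hab, inv_div]
  rw [Hc, hnum, hF, ← hb, key]
  ring
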